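/- arXiv:hep-th/9208010 — 2 statements merged into one kernel-verified Lean document; each statement's English description precedes it below -/
import Mathlib

section
/- If Λ ∈ A is a right integral (Λ a = ε(a) Λ for all a ∈ A) with ε(Λ) ≠ 0, and θ̃ = −(1/ε(Λ)) ω_U(Λ) ∈ A ⊗ A, then for every a ∈ A: D(a) = θ̃·a − a·θ̃, i.e. a ⊗ 1 − 1 ⊗ a = (θ̃)(1 ⊗ a acting on the right) minus (a ⊗ 1 acting on the left), using the bimodule structure c·(b ⊗ b') = cb ⊗ b' and (b ⊗ b')·c = b ⊗ b'c. -/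
open TensorProduct HopfAlgebra Coalgebra LinearMap

variable {k : Type*} [Field k] {A : Type*} [Ring A] [HopfAlgebra k A]

/-- The universal differential `D a = a ⊗ 1 - 1 ⊗ a` as a linear map. -/
noncomputable def Dlin (k A : Type*) [Field k] [Ring A] [HopfAlgebra k A] :
    A →ₗ[k] A ⊗[k] A :=
  (TensorProduct.mk k A A).flip 1 - TensorProduct.mk k A A 1

/-- Quantum Maurer-Cartan form `ω_U(a) = ε(a) 1⊗1 - Σ S(a₁) ⊗ a₂`. -/
noncomputable def omegaU (k A : Type*) [Field k] [Ring A] [HopfAlgebra k A] :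
    A →ₗ[k] A ⊗[k] A :=
  (Coalgebra.counit (R := k) (A := A)).smulRight ((1 : A) ⊗ₜ[k] (1 : A)) -
    (TensorProduct.map (antipode (R := k)) LinearMap.id) ∘ₗ Coalgebra.comul

/-- Left coaction on the universal calculus: `b ⊗ c ↦ Σ b₁c₁ ⊗ (b₂ ⊗ c₂)`. -/
noncomputable def deltaLU (k A : Type*) [Field k] [Ring A] [HopfAlgebra k A] :
    A ⊗[k] A →ₗ[k] A ⊗[k] (A ⊗[k] A) :=
  (TensorProduct.map (LinearMap.mul' k A) LinearMap.id) ∘ₗ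
    (TensorProduct.tensorTensorTensorComm k A A A A).toLinearMap ∘ₗ
    (TensorProduct.map Coalgebra.comul Coalgebra.comul)

/-- Right coaction on the universal calculus: `b ⊗ c ↦ Σ (b₁ ⊗ c₁) ⊗ b₂c₂`. -/
noncomputable def deltaRU (k A : Type*) [Field k] [Ring A] [HopfAlgebra k A] :
    A ⊗[k] A →ₗ[k] (A ⊗[k] A) ⊗[k] A :=
  (TensorProduct.map LinearMap.id (LinearMap.mul' k A)) ∘ₗ
    (TensorProduct.tensorTensorTensorComm k A A A A).toLinearMap ∘ₗ
    (TensorProduct.map Coalgebra.comul Coalgebra.comul)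

/-- The right adjoint coaction `Ad_R(a) = Σ a₂ ⊗ S(a₁)a₃`. -/
noncomputable def AdR (k A : Type*) [Field k] [Ring A] [HopfAlgebra k A] :
    A →ₗ[k] A ⊗[k] A :=
  (TensorProduct.map LinearMap.id (LinearMap.mul' k A)) ∘ₗ
    (TensorProduct.leftComm k A A A).toLinearMap ∘ₗ
    (TensorProduct.map (antipode (R := k)) LinearMap.id) ∘ₗ
    (TensorProduct.map LinearMap.id Coalgebra.comul) ∘ₗ Coalgebra.comul

noncomputable def mulRepr {x y : A} {ι κ : Type*} (r1 : Coalgebra.Repr k x ι) (r2 : Coalgebra.Repr k y κ) :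
    Coalgebra.Repr k (x*y) (ι × κ) where
  index := r1.index ×ˢ r2.index
  left := fun p => r1.left p.1 * r2.left p.2
  right := fun p => r1.right p.1 * r2.right p.2
  eq := by
    rw [Bialgebra.comul_mul, ← r1.eq, ← r2.eq, Finset.sum_mul_sum, Finset.sum_product]
    simp [Algebra.TensorProduct.tmul_mul_tmul]

lemma counit_smul_right {ι : Type*} (a : A) (r : Coalgebra.Repr k a ι) :
    ∑ i ∈ r.index, counit (R := k) (r.left i) • r.right i = a := by
  have h := congrArg (TensorProduct.lid k A) (sum_counit_tmul_eq r)
  rw [map_sum] at h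
  simp only [lid_tmul] at h
  simpa using h

lemma counit_smul_left {ι : Type*} (a : A) (r : Coalgebra.Repr k a ι) :
    ∑ i ∈ r.index, counit (R := k) (r.right i) • r.left i = a := by
  have h := congrArg (TensorProduct.rid k A) (sum_tmul_counit_eq r)
  rw [map_sum] at h
  simp only [rid_tmul] at h
  simpa using h

lemma collapse1 {u : A} {ι : Type*} (r2 : Coalgebra.Repr k u ι) (L R : A) :
    ∑ q ∈ r2.index, (L * r2.left q) * (antipode (R := k) (r2.right q) * R)
      = counit (R := k) u • (L * R) := by
  have : ∀ q, (L * r2.left q) * (antipode (R := k) (r2.right q) * R)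
      = L * ((r2.left q * antipode (R := k) (r2.right q)) * R) := by
    intro q; rw [mul_assoc, mul_assoc]
  rw [Finset.sum_congr rfl fun q _ => this q, ← Finset.mul_sum, ← Finset.sum_mul,
    sum_mul_antipode_eq_smul r2, smul_mul_assoc, one_mul, mul_smul_comm]

noncomputable def psi (k A : Type*) [Field k] [Ring A] [HopfAlgebra k A] :
    (A ⊗[k] (A ⊗[k] A)) ⊗[k] (A ⊗[k] (A ⊗[k] A)) →ₗ[k] A :=
  (LinearMap.mul' k A) ∘ₗ
    (TensorProduct.map ((antipode (R := k)) ∘ₗ LinearMap.mul' k A)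
      ((LinearMap.mul' k A) ∘ₗ
        (TensorProduct.map (LinearMap.mul' k A)
          ((LinearMap.mul' k A) ∘ₗ
            (TensorProduct.map (antipode (R := k)) (antipode (R := k))) ∘ₗ
            (TensorProduct.comm k A A).toLinearMap)) ∘ₗ
        (TensorProduct.tensorTensorTensorComm k A A A A).toLinearMap)) ∘ₗ
    (TensorProduct.tensorTensorTensorComm k A (A ⊗[k] A) A (A ⊗[k] A)).toLinearMap

@[simp] lemma psi_tmul (a b c d e f : A) :
    psi k A ((a ⊗ₜ (b ⊗ₜ c)) ⊗ₜ (d ⊗ₜ (e ⊗ₜ f))) =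
      antipode (R := k) (a * d) *
        ((b * e) * (antipode (R := k) f * antipode (R := k) c)) := by
  simp [psi, tensorTensorTensorComm_tmul]

theorem antipode_mul_rev (x y : A) :
    antipode (R := k) (x * y) = antipode (R := k) y * antipode (R := k) x := by
  classical
  obtain ⟨rx, ry⟩ : Coalgebra.Repr k x (A × A) × Coalgebra.Repr k y (A × A) := ⟨ℛ k x, ℛ k y⟩
  set rx1 : ∀ i : rx.ι, Coalgebra.Repr k (rx.left i) (A × A) := fun i => ℛ k (rx.left i) with hrx1
  set rx2 : ∀ i : rx.ι, Coalgebra.Repr k (rx.right i) (A × A) := fun i => ℛ k (rx.right i) with hrx2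
  set ry1 : ∀ i : ry.ι, Coalgebra.Repr k (ry.left i) (A × A) := fun i => ℛ k (ry.left i) with hry1
  set ry2 : ∀ i : ry.ι, Coalgebra.Repr k (ry.right i) (A × A) := fun i => ℛ k (ry.right i) with hry2
  have E := congrArg₂ (fun u v => psi k A (u ⊗ₜ[k] v))
    (sum_tmul_tmul_eq rx rx1 rx2) (sum_tmul_tmul_eq ry ry1 ry2)
  simp only [sum_tmul, tmul_sum, map_sum, psi_tmul] at E
  -- E : L4 = R4, with y-indices outermost
  have hx : ∀ c : A, (∑ i ∈ rx.index,
      counit (R := k) (rx.right i) • antipode (R := k) (rx.left i * c))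
      = antipode (R := k) (x * c) := by
    intro c
    conv_rhs => rw [← counit_smul_left x rx, Finset.sum_mul]
    rw [map_sum]
    exact Finset.sum_congr rfl fun i _ => by rw [smul_mul_assoc, map_smul]
  have hR : (∑ p ∈ ry.index, ∑ q ∈ (ry2 p).index, ∑ i ∈ rx.index, ∑ j ∈ (rx2 i).index,
      antipode (R := k) (rx.left i * ry.left p) *
        ((rx2 i).left j * (ry2 p).left q *
          (antipode (R := k) ((ry2 p).right q) * antipode (R := k) ((rx2 i).right j))))
      = antipode (R := k) (x * y) := by
    calc
      _ = ∑ p ∈ ry.index, ∑ i ∈ rx.index, ∑ j ∈ (rx2 i).index, ∑ q ∈ (ry2 p).index,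
            antipode (R := k) (rx.left i * ry.left p) *
              ((rx2 i).left j * (ry2 p).left q *
                (antipode (R := k) ((ry2 p).right q) * antipode (R := k) ((rx2 i).right j))) := by
          refine Finset.sum_congr rfl fun p _ => ?_
          rw [Finset.sum_comm]
          exact Finset.sum_congr rfl fun i _ => Finset.sum_comm
      _ = ∑ p ∈ ry.index, ∑ i ∈ rx.index, ∑ j ∈ (rx2 i).index,
            counit (R := k) (ry.right p) •
              (antipode (R := k) (rx.left i * ry.left p) *
                ((rx2 i).left j * antipode (R := k) ((rx2 i).right j))) := by
          refine Finset.sum_congr rfl fun p _ => Finset.sum_congr rfl fun i _ =>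
            Finset.sum_congr rfl fun j _ => ?_
          rw [← Finset.mul_sum, collapse1 (ry2 p), mul_smul_comm]
      _ = ∑ p ∈ ry.index, ∑ i ∈ rx.index,
            counit (R := k) (ry.right p) •
              (counit (R := k) (rx.right i) • antipode (R := k) (rx.left i * ry.left p)) := by
          refine Finset.sum_congr rfl fun p _ => Finset.sum_congr rfl fun i _ => ?_
          rw [← Finset.smul_sum, ← Finset.mul_sum, sum_mul_antipode_eq_smul (rx2 i),
            mul_smul_comm, mul_one]
      _ = ∑ p ∈ ry.index, counit (R := k) (ry.right p) • antipode (R := k) (x * ry.left p) := by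
          refine Finset.sum_congr rfl fun p _ => ?_
          rw [← Finset.smul_sum, hx]
      _ = antipode (R := k) (x * y) := by
          conv_rhs => rw [← counit_smul_left y ry, Finset.mul_sum]
          rw [map_sum]
          exact Finset.sum_congr rfl fun p _ => by rw [mul_smul_comm, map_smul]
  have hL : (∑ p ∈ ry.index, ∑ q ∈ (ry1 p).index, ∑ i ∈ rx.index, ∑ j ∈ (rx1 i).index,
      antipode (R := k) ((rx1 i).left j * (ry1 p).left q) *
        ((rx1 i).right j * (ry1 p).right q *
          (antipode (R := k) (ry.right p) * antipode (R := k) (rx.right i))))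
      = antipode (R := k) y * antipode (R := k) x := by
    calc
      _ = ∑ p ∈ ry.index, ∑ i ∈ rx.index, ∑ j ∈ (rx1 i).index, ∑ q ∈ (ry1 p).index,
            antipode (R := k) ((rx1 i).left j * (ry1 p).left q) *
              ((rx1 i).right j * (ry1 p).right q *
                (antipode (R := k) (ry.right p) * antipode (R := k) (rx.right i))) := by
          refine Finset.sum_congr rfl fun p _ => ?_
          rw [Finset.sum_comm]
          exact Finset.sum_congr rfl fun i _ => Finset.sum_comm
      _ = ∑ p ∈ ry.index, ∑ i ∈ rx.index,
            (counit (R := k) (rx.left i) * counit (R := k) (ry.left p)) •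
              (antipode (R := k) (ry.right p) * antipode (R := k) (rx.right i)) := by
          refine Finset.sum_congr rfl fun p _ => Finset.sum_congr rfl fun i _ => ?_
          have h1 : ∀ (j : (rx1 i).ι) (q : (ry1 p).ι),
              antipode (R := k) ((rx1 i).left j * (ry1 p).left q) *
                ((rx1 i).right j * (ry1 p).right q *
                  (antipode (R := k) (ry.right p) * antipode (R := k) (rx.right i)))
              = (antipode (R := k) ((rx1 i).left j * (ry1 p).left q) *
                  ((rx1 i).right j * (ry1 p).right q)) *
                  (antipode (R := k) (ry.right p) * antipode (R := k) (rx.right i)) :=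
            fun j q => (mul_assoc _ _ _).symm
          rw [Finset.sum_congr rfl fun j _ => Finset.sum_congr rfl fun q _ => h1 j q]
          have hm := sum_antipode_mul_eq_algebraMap_counit (R := k) (mulRepr (rx1 i) (ry1 p))
          simp only [mulRepr] at hm
          rw [Finset.sum_product] at hm
          simp only [← Finset.sum_mul]
          rw [hm, Bialgebra.counit_mul, ← Algebra.smul_def]
      _ = ∑ p ∈ ry.index, counit (R := k) (ry.left p) •
            (antipode (R := k) (ry.right p) * antipode (R := k) x) := by
          have hx2 : (∑ i ∈ rx.index,
              counit (R := k) (rx.left i) • antipode (R := k) (rx.right i))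
              = antipode (R := k) x := by
            conv_rhs => rw [← counit_smul_right x rx]
            rw [map_sum]
            exact Finset.sum_congr rfl fun i _ => (map_smul _ _ _).symm
          refine Finset.sum_congr rfl fun p _ => ?_
          have h2 : ∀ i : rx.ι,
              (counit (R := k) (rx.left i) * counit (R := k) (ry.left p)) •
                (antipode (R := k) (ry.right p) * antipode (R := k) (rx.right i))
              = counit (R := k) (ry.left p) •
                  (antipode (R := k) (ry.right p) *
                    (counit (R := k) (rx.left i) • antipode (R := k) (rx.right i))) := by
            intro i
            rw [mul_smul_comm, smul_smul, mul_comm]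
          rw [Finset.sum_congr rfl fun i _ => h2 i, ← Finset.smul_sum, ← Finset.mul_sum, hx2]
      _ = antipode (R := k) y * antipode (R := k) x := by
          have hy2 : (∑ p ∈ ry.index,
              counit (R := k) (ry.left p) • antipode (R := k) (ry.right p))
              = antipode (R := k) y := by
            conv_rhs => rw [← counit_smul_right y ry]
            rw [map_sum]
            exact Finset.sum_congr rfl fun p _ => (map_smul _ _ _).symm
          rw [← hy2, Finset.sum_mul]
          exact Finset.sum_congr rfl fun p _ => by rw [smul_mul_assoc]
  rw [hR] at E
  rw [hL] at E
  exact E.symm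

/-- `sandwich t (z ⊗ w) = (z ⊗ 1) * t * (1 ⊗ w)`. -/
noncomputable def sandwich (t : A ⊗[k] A) : A ⊗[k] A →ₗ[k] A ⊗[k] A :=
  TensorProduct.lift <| LinearMap.mk₂ k
    (fun z w => (z ⊗ₜ[k] (1:A)) * t * ((1:A) ⊗ₜ[k] w))
    (fun m₁ m₂ n => by rw [add_tmul, add_mul, add_mul])
    (fun c m n => by rw [← smul_tmul', smul_mul_assoc, smul_mul_assoc])
    (fun m n₁ n₂ => by rw [tmul_add, mul_add])
    (fun c m n => by rw [tmul_smul, mul_smul_comm])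

@[simp] lemma sandwich_tmul (t : A ⊗[k] A) (z w : A) :
    sandwich t (z ⊗ₜ[k] w) = (z ⊗ₜ[k] (1:A)) * t * ((1:A) ⊗ₜ[k] w) := rfl

/-- `gmap t (u ⊗ (v ⊗ w)) = ((u * S v) ⊗ 1) * t * (1 ⊗ w)`. -/
noncomputable def gmap (t : A ⊗[k] A) : A ⊗[k] (A ⊗[k] A) →ₗ[k] A ⊗[k] A :=
  sandwich t ∘ₗ (TensorProduct.map (LinearMap.mul' k A) LinearMap.id) ∘ₗ
    (TensorProduct.assoc k A A A).symm.toLinearMap ∘ₗ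
    (TensorProduct.map LinearMap.id (TensorProduct.map (antipode (R := k)) LinearMap.id))

@[simp] lemma gmap_tmul (t : A ⊗[k] A) (u v w : A) :
    gmap t (u ⊗ₜ[k] (v ⊗ₜ[k] w)) =
      ((u * antipode (R := k) v) ⊗ₜ[k] (1:A)) * t * ((1:A) ⊗ₜ[k] w) := by
  simp [gmap]


theorem key (Λ a : A) (hint : ∀ b : A, Λ * b = counit (R := k) b • Λ) :
    (a ⊗ₜ[k] (1:A)) * (TensorProduct.map (antipode (R := k)) LinearMap.id) (comul (R := k) Λ)
      = (TensorProduct.map (antipode (R := k)) LinearMap.id) (comul (R := k) Λ)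
          * ((1:A) ⊗ₜ[k] a) := by
  classical
  set θ : A ⊗[k] A := (TensorProduct.map (antipode (R := k)) LinearMap.id) (comul (R := k) Λ)
    with hθ
  obtain ⟨rΛ, ra⟩ : Coalgebra.Repr k Λ (A × A) × Coalgebra.Repr k a (A × A) := ⟨ℛ k Λ, ℛ k a⟩
  set ra1 : ∀ j : ra.ι, Coalgebra.Repr k (ra.left j) (A × A) := fun j => ℛ k (ra.left j) with hra1
  set ra2 : ∀ j : ra.ι, Coalgebra.Repr k (ra.right j) (A × A) := fun j => ℛ k (ra.right j) with hra2
  have hθs : θ = ∑ i ∈ rΛ.index, antipode (R := k) (rΛ.left i) ⊗ₜ[k] rΛ.right i := by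
    rw [hθ, ← rΛ.eq, map_sum]; simp
  have stepA : ∀ (x : A) (rx : Coalgebra.Repr k x (A × A)),
      ∑ n ∈ rx.index,
        (antipode (R := k) (rx.left n) ⊗ₜ[k] (1:A)) * θ * ((1:A) ⊗ₜ[k] rx.right n)
        = counit (R := k) x • θ := by
    intro x rx
    have lhs1 : ∀ n, (antipode (R := k) (rx.left n) ⊗ₜ[k] (1:A)) * θ * ((1:A) ⊗ₜ[k] rx.right n)
        = ∑ i ∈ rΛ.index,
            antipode (R := k) (rΛ.left i * rx.left n) ⊗ₜ[k] (rΛ.right i * rx.right n) := by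
      intro n
      rw [hθs, Finset.mul_sum, Finset.sum_mul]
      refine Finset.sum_congr rfl fun i _ => ?_
      rw [Algebra.TensorProduct.tmul_mul_tmul, Algebra.TensorProduct.tmul_mul_tmul,
        one_mul, mul_one, antipode_mul_rev]
    rw [Finset.sum_congr rfl fun n _ => lhs1 n, hθ, ← map_smul,
      show counit (R := k) x • comul (R := k) Λ = comul (R := k) (Λ * x) from by
        rw [hint x, map_smul],
      ← (mulRepr rΛ rx).eq, map_sum]
    simp only [mulRepr, map_tmul, LinearMap.id_coe, id_eq]
    rw [Finset.sum_product]
    exact Finset.sum_comm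
  calc (a ⊗ₜ[k] (1:A)) * θ
      = ∑ j ∈ ra.index, counit (R := k) (ra.right j) • ((ra.left j ⊗ₜ[k] (1:A)) * θ) := by
        conv_lhs => rw [← counit_smul_left a ra]
        rw [sum_tmul, Finset.sum_mul]
        exact Finset.sum_congr rfl fun j _ => by rw [← smul_tmul', smul_mul_assoc]
    _ = ∑ j ∈ ra.index, (ra.left j ⊗ₜ[k] (1:A)) *
          (∑ n ∈ (ra2 j).index, (antipode (R := k) ((ra2 j).left n) ⊗ₜ[k] (1:A)) * θ *
            ((1:A) ⊗ₜ[k] (ra2 j).right n)) := by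
        refine Finset.sum_congr rfl fun j _ => ?_
        rw [stepA (ra.right j) (ra2 j), mul_smul_comm]
    _ = ∑ j ∈ ra.index, ∑ n ∈ (ra2 j).index,
          ((ra.left j * antipode (R := k) ((ra2 j).left n)) ⊗ₜ[k] (1:A)) * θ *
            ((1:A) ⊗ₜ[k] (ra2 j).right n) := by
        refine Finset.sum_congr rfl fun j _ => ?_
        rw [Finset.mul_sum]
        refine Finset.sum_congr rfl fun n _ => ?_
        rw [← mul_assoc, ← mul_assoc, Algebra.TensorProduct.tmul_mul_tmul, one_mul]
    _ = ∑ j ∈ ra.index, ∑ n ∈ (ra2 j).index,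
          gmap θ (ra.left j ⊗ₜ[k] ((ra2 j).left n ⊗ₜ[k] (ra2 j).right n)) := by
        exact Finset.sum_congr rfl fun j _ => Finset.sum_congr rfl fun n _ =>
          (gmap_tmul θ _ _ _).symm
    _ = ∑ j ∈ ra.index, ∑ m ∈ (ra1 j).index,
          gmap θ ((ra1 j).left m ⊗ₜ[k] ((ra1 j).right m ⊗ₜ[k] ra.right j)) := by
        have E := congrArg (gmap θ) (sum_tmul_tmul_eq ra ra1 ra2)
        simp only [map_sum] at E
        exact E.symm
    _ = ∑ j ∈ ra.index,
          ((∑ m ∈ (ra1 j).index, (ra1 j).left m * antipode (R := k) ((ra1 j).right m))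
            ⊗ₜ[k] (1:A)) * θ * ((1:A) ⊗ₜ[k] ra.right j) := by
        refine Finset.sum_congr rfl fun j _ => ?_
        rw [sum_tmul, Finset.sum_mul, Finset.sum_mul]
        exact Finset.sum_congr rfl fun m _ => by rw [gmap_tmul]
    _ = ∑ j ∈ ra.index, counit (R := k) (ra.left j) • (θ * ((1:A) ⊗ₜ[k] ra.right j)) := by
        refine Finset.sum_congr rfl fun j _ => ?_
        rw [sum_mul_antipode_eq_smul (ra1 j), ← smul_tmul', smul_mul_assoc, smul_mul_assoc,
          ← Algebra.TensorProduct.one_def, one_mul]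
    _ = θ * ((1:A) ⊗ₜ[k] a) := by
        conv_rhs => rw [← counit_smul_right a ra]
        rw [tmul_sum, Finset.mul_sum]
        exact Finset.sum_congr rfl fun j _ => by rw [tmul_smul, mul_smul_comm]


/-- if `Λ` is a right integral with `ε(Λ) ≠ 0` and
`θ̃ = -(1/ε(Λ)) ω_U(Λ)`, then `Da = θ̃·a − a·θ̃` for all `a`. -/
theorem D_eq_theta_commutator (Λ : A)
    (hint : ∀ a : A, Λ * a = Coalgebra.counit (R := k) a • Λ)
    (hne : Coalgebra.counit (R := k) Λ ≠ 0) (a : A) :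
    Dlin k A a =
      (-(Coalgebra.counit (R := k) Λ)⁻¹ • omegaU k A Λ) * ((1 : A) ⊗ₜ[k] a)
        - (a ⊗ₜ[k] (1 : A)) * (-(Coalgebra.counit (R := k) Λ)⁻¹ • omegaU k A Λ) := by
  have hkey := key Λ a hint
  set c : k := Coalgebra.counit (R := k) Λ with hc
  set θ : A ⊗[k] A :=
    (TensorProduct.map (antipode (R := k)) LinearMap.id) (comul (R := k) Λ) with hθ
  have hω : omegaU k A Λ = c • ((1:A) ⊗ₜ[k] (1:A)) - θ := by
    simp [omegaU, hθ, hc]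
  have hD : Dlin k A a = a ⊗ₜ[k] (1:A) - (1:A) ⊗ₜ[k] a := by
    simp [Dlin]
  rw [hD, hω]
  have h1 : (-c⁻¹ • (c • ((1:A) ⊗ₜ[k] (1:A)) - θ)) = -(1 : A ⊗[k] A) + c⁻¹ • θ := by
    rw [smul_sub, smul_smul, neg_mul, inv_mul_cancel₀ hne, neg_smul, one_smul, neg_smul,
      sub_neg_eq_add, ← Algebra.TensorProduct.one_def]
  rw [h1, add_mul, mul_add, neg_one_mul, mul_neg_one, smul_mul_assoc, mul_smul_comm, hkey]
  abel
end

section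
/- Let α ∈ A be Ad_R-invariant and λ ∈ k, and define n_α(a) = (ε(α) + λ)(a ⊗ 1 − 1 ⊗ a) + Σ S(α₍₁₎) ⊗ α₍₂₎ a − Σ a S(α₍₁₎) ⊗ α₍₂₎. Then Δ_L^U(n_α(a)) = Σ a₍₁₎ ⊗ n_α(a₍₂₎) for all a ∈ A, where Δ_L^U(b ⊗ c) = Σ b₍₁₎ c₍₁₎ ⊗ b₍₂₎ ⊗ c₍₂₎. -/
open TensorProduct HopfAlgebra Coalgebra LinearMap

set_option synthInstance.maxHeartbeats 400000
set_option maxHeartbeats 1600000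

variable {k : Type*} [Field k] {A : Type*} [Ring A] [HopfAlgebra k A]

/-- The linear map `n_α(a) = (ε(α)+λ)(a⊗1 − 1⊗a) + Σ S(α₁) ⊗ α₂a − Σ aS(α₁) ⊗ α₂`. -/
noncomputable def nAlpha (k A : Type*) [Field k] [Ring A] [HopfAlgebra k A]
    (α : A) (lam : k) : A →ₗ[k] A ⊗[k] A :=
  (Coalgebra.counit (R := k) α + lam) • Dlin k A +
    (LinearMap.mulLeft k ((TensorProduct.map (antipode (R := k)) LinearMap.id)
        (Coalgebra.comul α))) ∘ₗ (TensorProduct.mk k A A 1) -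
    (LinearMap.mulRight k ((TensorProduct.map (antipode (R := k)) LinearMap.id)
        (Coalgebra.comul α))) ∘ₗ ((TensorProduct.mk k A A).flip 1)


/-- Sweedler coassociativity workhorse: push a linear map through both
three-leg expansions of `Δ²`. -/
private lemma tri₀ {M : Type*} [AddCommMonoid M] [Module k M]
    (φ : A ⊗[k] (A ⊗[k] A) →ₗ[k] M)
    {a : A} (r : Coalgebra.Repr k a (A × A)) (r1 : ∀ i : r.ι, Coalgebra.Repr k (r.left i) (A × A))
    (r2 : ∀ i : r.ι, Coalgebra.Repr k (r.right i) (A × A)) :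
    ∑ i ∈ r.index, ∑ j ∈ (r1 i).index,
      φ ((r1 i).left j ⊗ₜ[k] ((r1 i).right j ⊗ₜ[k] r.right i))
    = ∑ i ∈ r.index, ∑ j ∈ (r2 i).index,
      φ (r.left i ⊗ₜ[k] ((r2 i).left j ⊗ₜ[k] (r2 i).right j)) := by
  have h2 := congrArg (⇑φ) (Coalgebra.sum_tmul_tmul_eq r r1 r2)
  simpa [map_sum] using h2

private lemma csum {x : A} (r : Coalgebra.Repr k x (A × A)) :
    ∑ i ∈ r.index, Coalgebra.counit (R := k) (r.left i) • r.right i = x := by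
  calc ∑ i ∈ r.index, Coalgebra.counit (R := k) (r.left i) • r.right i
      = TensorProduct.lid k A (∑ i ∈ r.index,
          Coalgebra.counit (R := k) (r.left i) ⊗ₜ[k] r.right i) := by
        rw [map_sum]; simp
    _ = x := by rw [Coalgebra.sum_counit_tmul_eq r]; simp

private lemma rsum {x : A} (r : Coalgebra.Repr k x (A × A)) :
    ∑ i ∈ r.index, Coalgebra.counit (R := k) (r.right i) • r.left i = x := by
  calc ∑ i ∈ r.index, Coalgebra.counit (R := k) (r.right i) • r.left i
      = TensorProduct.rid k A (∑ i ∈ r.index,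
          r.left i ⊗ₜ[k] Coalgebra.counit (R := k) (r.right i)) := by
        rw [map_sum]; simp
    _ = x := by rw [Coalgebra.sum_tmul_counit_eq r]; simp

/-- Convolution product of linear maps into an algebra. -/
private noncomputable def conv {B : Type*} [Ring B] [Algebra k B]
    (f g : A →ₗ[k] B) : A →ₗ[k] B :=
  LinearMap.mul' k B ∘ₗ TensorProduct.map f g ∘ₗ Coalgebra.comul

private lemma conv_repr {B : Type*} [Ring B] [Algebra k B] (f g : A →ₗ[k] B)
    {a : A} (r : Coalgebra.Repr k a (A × A)) :
    conv f g a = ∑ i ∈ r.index, f (r.left i) * g (r.right i) := by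
  simp only [conv, LinearMap.comp_apply, ← r.eq, map_sum, TensorProduct.map_tmul,
    LinearMap.mul'_apply]

private lemma conv_assoc {B : Type*} [Ring B] [Algebra k B] (f g h : A →ₗ[k] B) :
    conv (conv f g) h = conv f (conv g h) := by
  ext a
  set r := ℛ k a with hr
  rw [conv_repr _ _ r, conv_repr _ _ r]
  have hl : ∀ i ∈ r.index, conv f g (r.left i) * h (r.right i)
      = ∑ j ∈ (ℛ k (r.left i)).index,
          (LinearMap.mul' k B ∘ₗ
            TensorProduct.map f (LinearMap.mul' k B ∘ₗ TensorProduct.map g h))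
            ((ℛ k (r.left i)).left j ⊗ₜ[k] ((ℛ k (r.left i)).right j ⊗ₜ[k] r.right i)) := by
    intro i _
    rw [conv_repr f g (ℛ k (r.left i)), Finset.sum_mul]
    simp [mul_assoc]
  have hrr : ∀ i ∈ r.index, f (r.left i) * conv g h (r.right i)
      = ∑ j ∈ (ℛ k (r.right i)).index,
          (LinearMap.mul' k B ∘ₗ
            TensorProduct.map f (LinearMap.mul' k B ∘ₗ TensorProduct.map g h))
            (r.left i ⊗ₜ[k] ((ℛ k (r.right i)).left j ⊗ₜ[k] (ℛ k (r.right i)).right j)) := by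
    intro i _
    rw [conv_repr g h (ℛ k (r.right i)), Finset.mul_sum]
    simp
  rw [Finset.sum_congr rfl hl, Finset.sum_congr rfl hrr]
  exact tri₀ _ r _ _

/-- The convolution unit `a ↦ ε(a) 1`. -/
private noncomputable def cunit (B : Type*) [Ring B] [Algebra k B] : A →ₗ[k] B :=
  Algebra.linearMap k B ∘ₗ Coalgebra.counit

private lemma conv_cunit_left {B : Type*} [Ring B] [Algebra k B] (f : A →ₗ[k] B) :
    conv (cunit B) f = f := by
  ext a
  set r := ℛ k a with hr
  rw [conv_repr _ _ r]
  calc ∑ i ∈ r.index, cunit B (r.left i) * f (r.right i)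
      = ∑ i ∈ r.index, f (Coalgebra.counit (R := k) (r.left i) • r.right i) := by
        refine Finset.sum_congr rfl fun i _ => ?_
        rw [map_smul, Algebra.smul_def]
        simp [cunit]
    _ = f a := by rw [← map_sum, csum r]

private lemma conv_cunit_right {B : Type*} [Ring B] [Algebra k B] (f : A →ₗ[k] B) :
    conv f (cunit B) = f := by
  ext a
  set r := ℛ k a with hr
  rw [conv_repr _ _ r]
  calc ∑ i ∈ r.index, f (r.left i) * cunit B (r.right i)
      = ∑ i ∈ r.index, f (Coalgebra.counit (R := k) (r.right i) • r.left i) := by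
        refine Finset.sum_congr rfl fun i _ => ?_
        rw [map_smul, Algebra.smul_def, Algebra.commutes]
        simp [cunit]
    _ = f a := by rw [← map_sum, rsum r]

private lemma conv_comul_comulS :
    conv (Coalgebra.comul (R := k) (A := A))
        (Coalgebra.comul (R := k) (A := A) ∘ₗ (antipode k))
      = cunit (A ⊗[k] A) := by
  ext a
  set r := ℛ k a with hr
  rw [conv_repr _ _ r]
  calc ∑ i ∈ r.index,
        Coalgebra.comul (R := k) (r.left i)
          * (Coalgebra.comul (R := k) ∘ₗ (antipode k)) (r.right i)
      = Coalgebra.comul (R := k)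
          (∑ i ∈ r.index, r.left i * antipode (R := k) (r.right i)) := by
        rw [map_sum]
        exact Finset.sum_congr rfl fun i _ => (Bialgebra.comul_mul _ _).symm
    _ = cunit (A ⊗[k] A) a := by
        rw [sum_mul_antipode_eq_algebraMap_counit r]
        simp [cunit]

private lemma conv_S2_comul :
    conv ((TensorProduct.comm k A A).toLinearMap ∘ₗ
          TensorProduct.map (antipode (R := k)) (antipode k) ∘ₗ Coalgebra.comul)
        (Coalgebra.comul (R := k) (A := A))
      = cunit (A ⊗[k] A) := by
  ext a
  set r := ℛ k a with hrdef
  set rL : ∀ i : r.ι, Coalgebra.Repr k (r.left i) (A × A) := fun i => ℛ k (r.left i) with hrL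
  set rR : ∀ i : r.ι, Coalgebra.Repr k (r.right i) (A × A) := fun i => ℛ k (r.right i) with hrR
  set F : A ⊗[k] (A ⊗[k] A) →ₗ[k] (A ⊗[k] A) :=
    LinearMap.mul' k (A ⊗[k] A) ∘ₗ
      TensorProduct.map
        ((TensorProduct.comm k A A).toLinearMap ∘ₗ
          TensorProduct.map (antipode (R := k)) (antipode k))
        (Coalgebra.comul (R := k)) ∘ₗ
      (TensorProduct.assoc k A A A).symm.toLinearMap with hF
  rw [conv_repr _ _ r]
  have stepA : ∀ i ∈ r.index,
      ((TensorProduct.comm k A A).toLinearMap ∘ₗ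
          TensorProduct.map (antipode (R := k)) (antipode k) ∘ₗ Coalgebra.comul) (r.left i)
        * Coalgebra.comul (R := k) (r.right i)
      = ∑ j ∈ (rL i).index,
          F ((rL i).left j ⊗ₜ[k] ((rL i).right j ⊗ₜ[k] r.right i)) := by
    intro i _
    rw [LinearMap.comp_apply, LinearMap.comp_apply, ← (rL i).eq]
    simp only [map_sum, TensorProduct.map_tmul, LinearEquiv.coe_coe,
      TensorProduct.comm_tmul, Finset.sum_mul, hF, LinearMap.comp_apply,
      TensorProduct.assoc_symm_tmul, LinearMap.mul'_apply]
  rw [Finset.sum_congr rfl stepA, tri₀ F r rL rR]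
  have stepC : ∀ i ∈ r.index, ∀ j ∈ (rR i).index,
      F (r.left i ⊗ₜ[k] ((rR i).left j ⊗ₜ[k] (rR i).right j))
      = ∑ m ∈ (ℛ k ((rR i).right j)).index,
          (TensorProduct.map (LinearMap.mul' k A ∘ₗ TensorProduct.map (antipode (R := k)) LinearMap.id)
              (LinearMap.mulLeft k (antipode (R := k) (r.left i))) ∘ₗ
            (TensorProduct.assoc k A A A).symm.toLinearMap)
            ((rR i).left j ⊗ₜ[k]
              ((ℛ k ((rR i).right j)).left m ⊗ₜ[k] (ℛ k ((rR i).right j)).right m)) := by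
    intro i _ j _
    simp only [hF, LinearMap.comp_apply, LinearEquiv.coe_coe,
      TensorProduct.assoc_symm_tmul, TensorProduct.map_tmul, TensorProduct.comm_tmul,
      LinearMap.mul'_apply]
    rw [← (ℛ k ((rR i).right j)).eq]
    simp only [map_sum, TensorProduct.tmul_sum, Finset.mul_sum]
    refine Finset.sum_congr rfl fun m _ => ?_
    simp [Algebra.TensorProduct.tmul_mul_tmul]
  calc ∑ i ∈ r.index, ∑ j ∈ (rR i).index,
        F (r.left i ⊗ₜ[k] ((rR i).left j ⊗ₜ[k] (rR i).right j))
      = ∑ i ∈ r.index, ∑ j ∈ (rR i).index,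
          ∑ m ∈ (ℛ k ((rR i).right j)).index,
          (TensorProduct.map (LinearMap.mul' k A ∘ₗ TensorProduct.map (antipode (R := k)) LinearMap.id)
              (LinearMap.mulLeft k (antipode (R := k) (r.left i))) ∘ₗ
            (TensorProduct.assoc k A A A).symm.toLinearMap)
            ((rR i).left j ⊗ₜ[k]
              ((ℛ k ((rR i).right j)).left m ⊗ₜ[k] (ℛ k ((rR i).right j)).right m)) := by
        exact Finset.sum_congr rfl fun i hi => Finset.sum_congr rfl (stepC i hi)
    _ = ∑ i ∈ r.index, ∑ j ∈ (rR i).index,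
          ∑ m ∈ (ℛ k ((rR i).left j)).index,
          (TensorProduct.map (LinearMap.mul' k A ∘ₗ TensorProduct.map (antipode (R := k)) LinearMap.id)
              (LinearMap.mulLeft k (antipode (R := k) (r.left i))) ∘ₗ
            (TensorProduct.assoc k A A A).symm.toLinearMap)
            ((ℛ k ((rR i).left j)).left m ⊗ₜ[k]
              ((ℛ k ((rR i).left j)).right m ⊗ₜ[k] (rR i).right j)) := by
        refine Finset.sum_congr rfl fun i _ => ?_
        exact (tri₀ _ (rR i) (fun j => ℛ k ((rR i).left j))
          (fun j => ℛ k ((rR i).right j))).symm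
    _ = ∑ i ∈ r.index,
          (1 : A) ⊗ₜ[k] (antipode (R := k) (r.left i) * r.right i) := by
        refine Finset.sum_congr rfl fun i _ => ?_
        calc ∑ j ∈ (rR i).index, ∑ m ∈ (ℛ k ((rR i).left j)).index,
              (TensorProduct.map (LinearMap.mul' k A ∘ₗ TensorProduct.map (antipode (R := k)) LinearMap.id)
                  (LinearMap.mulLeft k (antipode (R := k) (r.left i))) ∘ₗ
                (TensorProduct.assoc k A A A).symm.toLinearMap)
                ((ℛ k ((rR i).left j)).left m ⊗ₜ[k]
                  ((ℛ k ((rR i).left j)).right m ⊗ₜ[k] (rR i).right j))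
            = ∑ j ∈ (rR i).index,
                (1 : A) ⊗ₜ[k] (antipode (R := k) (r.left i)
                  * (Coalgebra.counit (R := k) ((rR i).left j) • (rR i).right j)) := by
              refine Finset.sum_congr rfl fun j _ => ?_
              simp only [LinearMap.comp_apply, LinearEquiv.coe_coe,
                TensorProduct.assoc_symm_tmul, TensorProduct.map_tmul,
                LinearMap.mul'_apply, LinearMap.mulLeft_apply, LinearMap.id_coe, id_eq]
              rw [← TensorProduct.sum_tmul, sum_antipode_mul_eq_algebraMap_counit (ℛ k ((rR i).left j)),
                Algebra.algebraMap_eq_smul_one, smul_tmul, ← mul_smul_comm]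
          _ = (1 : A) ⊗ₜ[k] (antipode (R := k) (r.left i) * r.right i) := by
              rw [← TensorProduct.tmul_sum, ← Finset.mul_sum, csum (rR i)]
    _ = cunit (A ⊗[k] A) a := by
        rw [← TensorProduct.tmul_sum, sum_antipode_mul_eq_algebraMap_counit r]
        simp [cunit, Algebra.algebraMap_eq_smul_one, Algebra.TensorProduct.one_def]

private lemma comul_comp_antipode :
    (Coalgebra.comul (R := k) (A := A)) ∘ₗ (antipode k)
      = (TensorProduct.comm k A A).toLinearMap ∘ₗ
          TensorProduct.map (antipode (R := k)) (antipode k) ∘ₗ Coalgebra.comul := by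
  calc Coalgebra.comul (R := k) (A := A) ∘ₗ (antipode k)
      = conv (cunit (A ⊗[k] A)) (Coalgebra.comul (R := k) ∘ₗ (antipode k)) :=
        (conv_cunit_left _).symm
    _ = conv (conv ((TensorProduct.comm k A A).toLinearMap ∘ₗ
          TensorProduct.map (antipode (R := k)) (antipode k) ∘ₗ Coalgebra.comul)
          (Coalgebra.comul (R := k))) (Coalgebra.comul (R := k) ∘ₗ (antipode k)) := by
        rw [conv_S2_comul]
    _ = conv ((TensorProduct.comm k A A).toLinearMap ∘ₗ
          TensorProduct.map (antipode (R := k)) (antipode k) ∘ₗ Coalgebra.comul)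
          (conv (Coalgebra.comul (R := k)) (Coalgebra.comul (R := k) ∘ₗ (antipode k))) :=
        conv_assoc _ _ _
    _ = (TensorProduct.comm k A A).toLinearMap ∘ₗ
          TensorProduct.map (antipode (R := k)) (antipode k) ∘ₗ Coalgebra.comul := by
        rw [conv_comul_comulS, conv_cunit_right]

private lemma comul_antipode_repr {x : A} (r : Coalgebra.Repr k x (A × A)) :
    Coalgebra.comul (R := k) (antipode (R := k) x)
      = ∑ i ∈ r.index,
          antipode (R := k) (r.right i) ⊗ₜ[k] antipode (R := k) (r.left i) := by
  have h := LinearMap.congr_fun (comul_comp_antipode (k := k) (A := A)) x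
  rw [LinearMap.comp_apply] at h
  rw [h, LinearMap.comp_apply, LinearMap.comp_apply, ← r.eq]
  simp [map_sum]

private lemma inv_core (α : A) (r : Coalgebra.Repr k α (A × A))
    (rL : ∀ i : r.ι, Coalgebra.Repr k (r.left i) (A × A))
    (rR : ∀ i : r.ι, Coalgebra.Repr k (r.right i) (A × A)) :
    ∑ i ∈ r.index, ∑ j ∈ (rL i).index, ∑ m ∈ (rR i).index,
      (antipode (R := k) ((rL i).right j) * (rR i).left m) ⊗ₜ[k]
        (antipode (R := k) ((rL i).left j) ⊗ₜ[k] (rR i).right m)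
    = ∑ i ∈ r.index,
        (1 : A) ⊗ₜ[k] (antipode (R := k) (r.left i) ⊗ₜ[k] r.right i) := by
  set F : A ⊗[k] (A ⊗[k] A) →ₗ[k] A ⊗[k] (A ⊗[k] A) :=
    (TensorProduct.map (LinearMap.mul' k A) LinearMap.id ∘ₗ
      (TensorProduct.tensorTensorTensorComm k A A A A).toLinearMap ∘ₗ
      (TensorProduct.assoc k A A (A ⊗[k] A)).symm.toLinearMap) ∘ₗ
      TensorProduct.map (antipode (R := k))
        (TensorProduct.map (antipode (R := k)) (Coalgebra.comul (R := k))) ∘ₗ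
      (TensorProduct.leftComm k A A A).toLinearMap with hF
  set rRa : ∀ i : r.ι, Coalgebra.Repr k (r.right i) (A × A) := fun i => ℛ k (r.right i) with hrRa
  have stepA : ∀ i ∈ r.index, ∀ j ∈ (rL i).index,
      ∑ m ∈ (rR i).index,
        (antipode (R := k) ((rL i).right j) * (rR i).left m) ⊗ₜ[k]
          (antipode (R := k) ((rL i).left j) ⊗ₜ[k] (rR i).right m)
      = F ((rL i).left j ⊗ₜ[k] ((rL i).right j ⊗ₜ[k] r.right i)) := by
    intro i _ j _
    simp only [hF, LinearMap.comp_apply, LinearEquiv.coe_coe,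
      TensorProduct.leftComm_tmul, TensorProduct.map_tmul]
    rw [← (rR i).eq]
    simp only [map_sum, TensorProduct.tmul_sum, TensorProduct.assoc_symm_tmul,
      TensorProduct.tensorTensorTensorComm_tmul, TensorProduct.map_tmul,
      LinearMap.comp_apply, LinearMap.mul'_apply, LinearMap.id_coe, id_eq]
  have stepC : ∀ i ∈ r.index, ∀ j ∈ (rRa i).index,
      F (r.left i ⊗ₜ[k] ((rRa i).left j ⊗ₜ[k] (rRa i).right j))
      = ∑ m ∈ (ℛ k ((rRa i).right j)).index,
          (TensorProduct.map (LinearMap.mul' k A ∘ₗ TensorProduct.map (antipode (R := k)) LinearMap.id)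
              (TensorProduct.mk k A A (antipode (R := k) (r.left i))) ∘ₗ
            (TensorProduct.assoc k A A A).symm.toLinearMap)
            ((rRa i).left j ⊗ₜ[k]
              ((ℛ k ((rRa i).right j)).left m ⊗ₜ[k] (ℛ k ((rRa i).right j)).right m)) := by
    intro i _ j _
    simp only [hF, LinearMap.comp_apply, LinearEquiv.coe_coe,
      TensorProduct.leftComm_tmul, TensorProduct.map_tmul]
    rw [← (ℛ k ((rRa i).right j)).eq]
    simp only [map_sum, TensorProduct.tmul_sum, TensorProduct.assoc_symm_tmul,
      TensorProduct.tensorTensorTensorComm_tmul, TensorProduct.map_tmul,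
      LinearMap.comp_apply, LinearMap.mul'_apply, LinearMap.id_coe, id_eq,
      TensorProduct.mk_apply]
  calc ∑ i ∈ r.index, ∑ j ∈ (rL i).index, ∑ m ∈ (rR i).index,
        (antipode (R := k) ((rL i).right j) * (rR i).left m) ⊗ₜ[k]
          (antipode (R := k) ((rL i).left j) ⊗ₜ[k] (rR i).right m)
      = ∑ i ∈ r.index, ∑ j ∈ (rL i).index,
          F ((rL i).left j ⊗ₜ[k] ((rL i).right j ⊗ₜ[k] r.right i)) := by
        exact Finset.sum_congr rfl fun i hi => Finset.sum_congr rfl (stepA i hi)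
    _ = ∑ i ∈ r.index, ∑ j ∈ (rRa i).index,
          F (r.left i ⊗ₜ[k] ((rRa i).left j ⊗ₜ[k] (rRa i).right j)) :=
        tri₀ F r rL rRa
    _ = ∑ i ∈ r.index, ∑ j ∈ (rRa i).index,
          ∑ m ∈ (ℛ k ((rRa i).right j)).index,
          (TensorProduct.map (LinearMap.mul' k A ∘ₗ TensorProduct.map (antipode (R := k)) LinearMap.id)
              (TensorProduct.mk k A A (antipode (R := k) (r.left i))) ∘ₗ
            (TensorProduct.assoc k A A A).symm.toLinearMap)
            ((rRa i).left j ⊗ₜ[k]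
              ((ℛ k ((rRa i).right j)).left m ⊗ₜ[k] (ℛ k ((rRa i).right j)).right m)) := by
        exact Finset.sum_congr rfl fun i hi => Finset.sum_congr rfl (stepC i hi)
    _ = ∑ i ∈ r.index, ∑ j ∈ (rRa i).index,
          ∑ m ∈ (ℛ k ((rRa i).left j)).index,
          (TensorProduct.map (LinearMap.mul' k A ∘ₗ TensorProduct.map (antipode (R := k)) LinearMap.id)
              (TensorProduct.mk k A A (antipode (R := k) (r.left i))) ∘ₗ
            (TensorProduct.assoc k A A A).symm.toLinearMap)
            ((ℛ k ((rRa i).left j)).left m ⊗ₜ[k]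
              ((ℛ k ((rRa i).left j)).right m ⊗ₜ[k] (rRa i).right j)) := by
        refine Finset.sum_congr rfl fun i _ => ?_
        exact (tri₀ _ (rRa i) (fun j => ℛ k ((rRa i).left j))
          (fun j => ℛ k ((rRa i).right j))).symm
    _ = ∑ i ∈ r.index,
          (1 : A) ⊗ₜ[k] (antipode (R := k) (r.left i) ⊗ₜ[k] r.right i) := by
        refine Finset.sum_congr rfl fun i _ => ?_
        calc ∑ j ∈ (rRa i).index, ∑ m ∈ (ℛ k ((rRa i).left j)).index,
              (TensorProduct.map (LinearMap.mul' k A ∘ₗ TensorProduct.map (antipode (R := k)) LinearMap.id)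
                  (TensorProduct.mk k A A (antipode (R := k) (r.left i))) ∘ₗ
                (TensorProduct.assoc k A A A).symm.toLinearMap)
                ((ℛ k ((rRa i).left j)).left m ⊗ₜ[k]
                  ((ℛ k ((rRa i).left j)).right m ⊗ₜ[k] (rRa i).right j))
            = ∑ j ∈ (rRa i).index,
                (1 : A) ⊗ₜ[k] (antipode (R := k) (r.left i) ⊗ₜ[k]
                  (Coalgebra.counit (R := k) ((rRa i).left j) • (rRa i).right j)) := by
              refine Finset.sum_congr rfl fun j _ => ?_
              simp only [LinearMap.comp_apply, LinearEquiv.coe_coe,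
                TensorProduct.assoc_symm_tmul, TensorProduct.map_tmul,
                LinearMap.mul'_apply, TensorProduct.mk_apply,
                LinearMap.id_coe, id_eq]
              rw [← TensorProduct.sum_tmul, sum_antipode_mul_eq_algebraMap_counit (ℛ k ((rRa i).left j)),
                Algebra.algebraMap_eq_smul_one, smul_tmul, ← TensorProduct.tmul_smul]
          _ = (1 : A) ⊗ₜ[k] (antipode (R := k) (r.left i) ⊗ₜ[k] r.right i) := by
              rw [← TensorProduct.tmul_sum, ← TensorProduct.tmul_sum, csum (rRa i)]

private lemma comul_mul_repr {u v : A} (ru : Coalgebra.Repr k u (A × A)) (rv : Coalgebra.Repr k v (A × A)) :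
    Coalgebra.comul (R := k) (u * v)
      = ∑ m ∈ ru.index, ∑ n ∈ rv.index,
          (ru.left m * rv.left n) ⊗ₜ[k] (ru.right m * rv.right n) := by
  rw [Bialgebra.comul_mul, ← ru.eq, ← rv.eq, Finset.sum_mul_sum]
  simp [Algebra.TensorProduct.tmul_mul_tmul]

private lemma deltaLU_apply (b c : A) :
    deltaLU k A (b ⊗ₜ[k] c) =
      (TensorProduct.map (LinearMap.mul' k A) LinearMap.id)
        ((TensorProduct.tensorTensorTensorComm k A A A A)
          (Coalgebra.comul (R := k) b ⊗ₜ[k] Coalgebra.comul (R := k) c)) := by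
  simp [deltaLU]

private lemma T1 (a : A) :
    deltaLU k A (Dlin k A a)
      = (TensorProduct.map LinearMap.id (Dlin k A)) (Coalgebra.comul (R := k) a) := by
  set ra := ℛ k a with hra
  have h1 : Dlin k A a = a ⊗ₜ[k] (1 : A) - (1 : A) ⊗ₜ[k] a := by
    simp [Dlin]
  rw [h1, map_sub, deltaLU_apply, deltaLU_apply, ← ra.eq]
  simp only [Bialgebra.comul_one, Algebra.TensorProduct.one_def, TensorProduct.sum_tmul, TensorProduct.tmul_sum, map_sum,
    TensorProduct.tensorTensorTensorComm_tmul, TensorProduct.map_tmul,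
    LinearMap.mul'_apply, LinearMap.id_coe, id_eq, mul_one, one_mul]
  rw [← Finset.sum_sub_distrib]
  refine Finset.sum_congr rfl fun n _ => ?_
  simp [Dlin, TensorProduct.tmul_sub]

private lemma T2 (α a : A) :
    deltaLU k A
        ((TensorProduct.map (antipode (R := k)) LinearMap.id) (Coalgebra.comul α)
          * ((1 : A) ⊗ₜ[k] a))
      = (TensorProduct.map LinearMap.id
          (LinearMap.mulLeft k
              ((TensorProduct.map (antipode (R := k)) LinearMap.id) (Coalgebra.comul α)) ∘ₗ
            TensorProduct.mk k A A 1)) (Coalgebra.comul (R := k) a) := by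
  set r := ℛ k α with hr
  set rL : ∀ i : r.ι, Coalgebra.Repr k (r.left i) (A × A) := fun i => ℛ k (r.left i) with hrL
  set rR : ∀ i : r.ι, Coalgebra.Repr k (r.right i) (A × A) := fun i => ℛ k (r.right i) with hrR
  set ra := ℛ k a with hra
  have hw : (TensorProduct.map (antipode (R := k)) LinearMap.id) (Coalgebra.comul α)
      = ∑ i ∈ r.index, antipode (R := k) (r.left i) ⊗ₜ[k] r.right i := by
    rw [← r.eq]
    simp [map_sum]
  have key := inv_core α r rL rR
  have hL : deltaLU k A
        ((TensorProduct.map (antipode (R := k)) LinearMap.id) (Coalgebra.comul α)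
          * ((1 : A) ⊗ₜ[k] a))
      = ∑ i ∈ r.index, ∑ j ∈ (rL i).index, ∑ m ∈ (rR i).index, ∑ n ∈ ra.index,
          (antipode (R := k) ((rL i).right j) * ((rR i).left m * ra.left n)) ⊗ₜ[k]
            (antipode (R := k) ((rL i).left j) ⊗ₜ[k] ((rR i).right m * ra.right n)) := by
    rw [hw, Finset.sum_mul, map_sum]
    refine Finset.sum_congr rfl fun i _ => ?_
    rw [Algebra.TensorProduct.tmul_mul_tmul, mul_one, deltaLU_apply,
      comul_antipode_repr (rL i), comul_mul_repr (rR i) ra]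
    simp only [TensorProduct.sum_tmul, TensorProduct.tmul_sum, map_sum,
      TensorProduct.tensorTensorTensorComm_tmul, TensorProduct.map_tmul,
      LinearMap.mul'_apply, LinearMap.id_coe, id_eq]
    exact (Finset.sum_congr rfl fun m _ => Finset.sum_comm).trans Finset.sum_comm
  have hR : (TensorProduct.map LinearMap.id
        (LinearMap.mulLeft k
            ((TensorProduct.map (antipode (R := k)) LinearMap.id) (Coalgebra.comul α)) ∘ₗ
          TensorProduct.mk k A A 1)) (Coalgebra.comul (R := k) a)
      = ∑ n ∈ ra.index, ∑ i ∈ r.index,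
          ra.left n ⊗ₜ[k]
            (antipode (R := k) (r.left i) ⊗ₜ[k] (r.right i * ra.right n)) := by
    rw [← ra.eq]
    simp only [map_sum, TensorProduct.map_tmul, LinearMap.comp_apply,
      TensorProduct.mk_apply, LinearMap.mulLeft_apply, LinearMap.id_coe, id_eq]
    refine Finset.sum_congr rfl fun n _ => ?_
    rw [hw, Finset.sum_mul]
    simp [Algebra.TensorProduct.tmul_mul_tmul, TensorProduct.tmul_sum]
  rw [hL, hR]
  calc ∑ i ∈ r.index, ∑ j ∈ (rL i).index, ∑ m ∈ (rR i).index, ∑ n ∈ ra.index,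
        (antipode (R := k) ((rL i).right j) * ((rR i).left m * ra.left n)) ⊗ₜ[k]
          (antipode (R := k) ((rL i).left j) ⊗ₜ[k] ((rR i).right m * ra.right n))
      = ∑ i ∈ r.index, ∑ j ∈ (rL i).index, ∑ n ∈ ra.index, ∑ m ∈ (rR i).index,
        (antipode (R := k) ((rL i).right j) * ((rR i).left m * ra.left n)) ⊗ₜ[k]
          (antipode (R := k) ((rL i).left j) ⊗ₜ[k] ((rR i).right m * ra.right n)) :=
        Finset.sum_congr rfl fun i _ => Finset.sum_congr rfl fun j _ => Finset.sum_comm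
    _ = ∑ i ∈ r.index, ∑ n ∈ ra.index, ∑ j ∈ (rL i).index, ∑ m ∈ (rR i).index,
        (antipode (R := k) ((rL i).right j) * ((rR i).left m * ra.left n)) ⊗ₜ[k]
          (antipode (R := k) ((rL i).left j) ⊗ₜ[k] ((rR i).right m * ra.right n)) :=
        Finset.sum_congr rfl fun i _ => Finset.sum_comm
    _ = ∑ n ∈ ra.index, ∑ i ∈ r.index, ∑ j ∈ (rL i).index, ∑ m ∈ (rR i).index,
        (antipode (R := k) ((rL i).right j) * ((rR i).left m * ra.left n)) ⊗ₜ[k]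
          (antipode (R := k) ((rL i).left j) ⊗ₜ[k] ((rR i).right m * ra.right n)) :=
        Finset.sum_comm
    _ = ∑ n ∈ ra.index, ∑ i ∈ r.index,
          ra.left n ⊗ₜ[k]
            (antipode (R := k) (r.left i) ⊗ₜ[k] (r.right i * ra.right n)) := by
        refine Finset.sum_congr rfl fun n _ => ?_
        have h2 := congrArg
          (⇑(TensorProduct.map (LinearMap.mulRight k (ra.left n))
              (TensorProduct.map LinearMap.id (LinearMap.mulRight k (ra.right n))))) key
        simpa [map_sum, TensorProduct.map_tmul, LinearMap.mulRight_apply,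
          LinearMap.id_coe, id_eq, mul_assoc] using h2

private lemma T3 (α a : A) :
    deltaLU k A
        ((a ⊗ₜ[k] (1 : A))
          * (TensorProduct.map (antipode (R := k)) LinearMap.id) (Coalgebra.comul α))
      = (TensorProduct.map LinearMap.id
          (LinearMap.mulRight k
              ((TensorProduct.map (antipode (R := k)) LinearMap.id) (Coalgebra.comul α)) ∘ₗ
            (TensorProduct.mk k A A).flip 1)) (Coalgebra.comul (R := k) a) := by
  set r := ℛ k α with hr
  set rL : ∀ i : r.ι, Coalgebra.Repr k (r.left i) (A × A) := fun i => ℛ k (r.left i) with hrL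
  set rR : ∀ i : r.ι, Coalgebra.Repr k (r.right i) (A × A) := fun i => ℛ k (r.right i) with hrR
  set ra := ℛ k a with hra
  have hw : (TensorProduct.map (antipode (R := k)) LinearMap.id) (Coalgebra.comul α)
      = ∑ i ∈ r.index, antipode (R := k) (r.left i) ⊗ₜ[k] r.right i := by
    rw [← r.eq]
    simp [map_sum]
  have key := inv_core α r rL rR
  have hL : deltaLU k A
        ((a ⊗ₜ[k] (1 : A))
          * (TensorProduct.map (antipode (R := k)) LinearMap.id) (Coalgebra.comul α))
      = ∑ i ∈ r.index, ∑ j ∈ (rL i).index, ∑ m ∈ (rR i).index, ∑ n ∈ ra.index,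
          (ra.left n * (antipode (R := k) ((rL i).right j) * (rR i).left m)) ⊗ₜ[k]
            ((ra.right n * antipode (R := k) ((rL i).left j)) ⊗ₜ[k] (rR i).right m) := by
    rw [hw, Finset.mul_sum, map_sum]
    refine Finset.sum_congr rfl fun i _ => ?_
    rw [Algebra.TensorProduct.tmul_mul_tmul, one_mul, deltaLU_apply,
      Bialgebra.comul_mul, comul_antipode_repr (rL i), ← ra.eq, Finset.sum_mul_sum]
    rw [show (Coalgebra.comul (R := k) (r.right i)) = _ from ((rR i).eq).symm]
    simp only [Algebra.TensorProduct.tmul_mul_tmul, TensorProduct.sum_tmul,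
      TensorProduct.tmul_sum, map_sum, TensorProduct.tensorTensorTensorComm_tmul,
      TensorProduct.map_tmul, LinearMap.mul'_apply, LinearMap.id_coe, id_eq, mul_assoc]
    exact (Finset.sum_congr rfl fun m _ => Finset.sum_comm).trans Finset.sum_comm
  have hR : (TensorProduct.map LinearMap.id
        (LinearMap.mulRight k
            ((TensorProduct.map (antipode (R := k)) LinearMap.id) (Coalgebra.comul α)) ∘ₗ
          (TensorProduct.mk k A A).flip 1)) (Coalgebra.comul (R := k) a)
      = ∑ n ∈ ra.index, ∑ i ∈ r.index,
          ra.left n ⊗ₜ[k]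
            ((ra.right n * antipode (R := k) (r.left i)) ⊗ₜ[k] r.right i) := by
    rw [← ra.eq]
    simp only [map_sum, TensorProduct.map_tmul, LinearMap.comp_apply,
      LinearMap.flip_apply, TensorProduct.mk_apply, LinearMap.mulRight_apply,
      LinearMap.id_coe, id_eq]
    refine Finset.sum_congr rfl fun n _ => ?_
    rw [hw, Finset.mul_sum]
    simp [Algebra.TensorProduct.tmul_mul_tmul, TensorProduct.tmul_sum]
  rw [hL, hR]
  calc ∑ i ∈ r.index, ∑ j ∈ (rL i).index, ∑ m ∈ (rR i).index, ∑ n ∈ ra.index,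
        (ra.left n * (antipode (R := k) ((rL i).right j) * (rR i).left m)) ⊗ₜ[k]
          ((ra.right n * antipode (R := k) ((rL i).left j)) ⊗ₜ[k] (rR i).right m)
      = ∑ i ∈ r.index, ∑ j ∈ (rL i).index, ∑ n ∈ ra.index, ∑ m ∈ (rR i).index,
        (ra.left n * (antipode (R := k) ((rL i).right j) * (rR i).left m)) ⊗ₜ[k]
          ((ra.right n * antipode (R := k) ((rL i).left j)) ⊗ₜ[k] (rR i).right m) :=
        Finset.sum_congr rfl fun i _ => Finset.sum_congr rfl fun j _ => Finset.sum_comm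
    _ = ∑ i ∈ r.index, ∑ n ∈ ra.index, ∑ j ∈ (rL i).index, ∑ m ∈ (rR i).index,
        (ra.left n * (antipode (R := k) ((rL i).right j) * (rR i).left m)) ⊗ₜ[k]
          ((ra.right n * antipode (R := k) ((rL i).left j)) ⊗ₜ[k] (rR i).right m) :=
        Finset.sum_congr rfl fun i _ => Finset.sum_comm
    _ = ∑ n ∈ ra.index, ∑ i ∈ r.index, ∑ j ∈ (rL i).index, ∑ m ∈ (rR i).index,
        (ra.left n * (antipode (R := k) ((rL i).right j) * (rR i).left m)) ⊗ₜ[k]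
          ((ra.right n * antipode (R := k) ((rL i).left j)) ⊗ₜ[k] (rR i).right m) :=
        Finset.sum_comm
    _ = ∑ n ∈ ra.index, ∑ i ∈ r.index,
          ra.left n ⊗ₜ[k]
            ((ra.right n * antipode (R := k) (r.left i)) ⊗ₜ[k] r.right i) := by
        refine Finset.sum_congr rfl fun n _ => ?_
        have h2 := congrArg
          (⇑(TensorProduct.map (LinearMap.mulLeft k (ra.left n))
              (TensorProduct.map (LinearMap.mulLeft k (ra.right n)) LinearMap.id))) key
        simpa [map_sum, TensorProduct.map_tmul, LinearMap.mulLeft_apply,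
          LinearMap.id_coe, id_eq, mul_assoc] using h2

/-- for `Ad_R`-invariant `α`,
`Δ_L^U(n_α(a)) = Σ a₁ ⊗ n_α(a₂)`. -/
theorem nAlpha_left_covariant (α : A) (lam : k)
    (h : AdR k A α = α ⊗ₜ[k] (1 : A)) (a : A) :
    deltaLU k A (nAlpha k A α lam a) =
      (TensorProduct.map (LinearMap.id : A →ₗ[k] A) (nAlpha k A α lam))
        (Coalgebra.comul (R := k) a) := by
  have hn : nAlpha k A α lam a
      = (Coalgebra.counit (R := k) α + lam) • Dlin k A a
        + (TensorProduct.map (antipode (R := k)) LinearMap.id) (Coalgebra.comul α)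
            * ((1 : A) ⊗ₜ[k] a)
        - (a ⊗ₜ[k] (1 : A))
            * (TensorProduct.map (antipode (R := k)) LinearMap.id) (Coalgebra.comul α) := by
    simp [nAlpha]
  have hsplit : (TensorProduct.map (LinearMap.id : A →ₗ[k] A) (nAlpha k A α lam))
        (Coalgebra.comul (R := k) a)
      = (Coalgebra.counit (R := k) α + lam) •
          (TensorProduct.map LinearMap.id (Dlin k A)) (Coalgebra.comul (R := k) a)
        + (TensorProduct.map LinearMap.id
            (LinearMap.mulLeft k
                ((TensorProduct.map (antipode (R := k)) LinearMap.id) (Coalgebra.comul α)) ∘ₗ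
              TensorProduct.mk k A A 1)) (Coalgebra.comul (R := k) a)
        - (TensorProduct.map LinearMap.id
            (LinearMap.mulRight k
                ((TensorProduct.map (antipode (R := k)) LinearMap.id) (Coalgebra.comul α)) ∘ₗ
              (TensorProduct.mk k A A).flip 1)) (Coalgebra.comul (R := k) a) := by
    set ra := ℛ k a with hra
    rw [← ra.eq]
    simp only [map_sum, TensorProduct.map_tmul, LinearMap.id_coe, id_eq]
    rw [Finset.smul_sum, ← Finset.sum_add_distrib, ← Finset.sum_sub_distrib]
    refine Finset.sum_congr rfl fun n _ => ?_
    simp [nAlpha, TensorProduct.tmul_add, TensorProduct.tmul_sub, TensorProduct.tmul_smul]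
  rw [hn, map_sub, map_add, map_smul, T1 a, T2 α a, T3 α a, hsplit]
end
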